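/- Let T be a desingularized operator for L of order k with lc_∂(T) = a·g where a ∈ R and g ∈ R[x] is primitive. Then for every F ∈ cont(L) of order j ≥ k, the polynomial σ^{j−k}(g) divides lc_∂(F) in R[x]. -/

import Mathlib

open Polynomial

noncomputable section

/-- `Q_R(x)`, the field of rational functions over the fraction field `Q_R` of `R`,
realized as the fraction field of `R[x]`. -/
abbrev QX (R : Type) [CommRing R] [IsDomain R] := FractionRing (Polynomial R)

/-- Data of an Ore algebra `R[x][∂; σ, δ] ⊆ Q_R(x)[∂; σ, δ]`.
The ring `A` plays the role of `Q_R(x)[∂]`; `ι` embeds the coefficient field,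
`D` is the Ore variable `∂`, subject to the commutation rule `∂·p = σ(p)·∂ + δ(p)`,
and every element of `A` has a unique finite coefficient expansion `Σ ι(cᵢ)·∂^i`. -/
structure OreAlg (R : Type) [CommRing R] [IsDomain R] (A : Type) [Ring A] where
  σ : Polynomial R ≃+* Polynomial R
  σ_fix : ∀ r : R, σ (C r) = C r
  δ : Polynomial R → Polynomial R
  δ_add : ∀ f g, δ (f + g) = δ f + δ g
  δ_linear : ∀ (r : R) (f), δ (C r * f) = C r * δ f
  ι : QX R →+* A
  ι_inj : Function.Injective ι
  D : A
  comm_rule : ∀ p : Polynomial R,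
    D * ι (algebraMap (Polynomial R) (QX R) p)
      = ι (algebraMap (Polynomial R) (QX R) (σ p)) * D
        + ι (algebraMap (Polynomial R) (QX R) (δ p))
  δ_leibniz : ∀ f g, δ (f * g) = σ f * δ g + δ f * g
  coeff : A → ℕ → QX R
  coeff_inj : ∀ P Q : A, (∀ i, coeff P i = coeff Q i) → P = Q
  coeff_add : ∀ P Q i, coeff (P + Q) i = coeff P i + coeff Q i
  coeff_smul : ∀ (f : QX R) (P : A) (i), coeff (ι f * P) i = f * coeff P i
  coeff_bdd : ∀ P : A, ∃ N, ∀ i, N < i → coeff P i = 0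
  coeff_mk : ∀ (N : ℕ) (c : ℕ → QX R), (∀ i, N < i → c i = 0) →
    ∀ j, coeff (∑ i ∈ Finset.range (N + 1), ι (c i) * D ^ i) j = c j

namespace OreAlg

variable {R : Type} [CommRing R] [IsDomain R] {A : Type} [Ring A] (O : OreAlg R A)

/-- The embedding of `R[x]` into the Ore algebra. -/
def ιp (f : Polynomial R) : A := O.ι (algebraMap (Polynomial R) (QX R) f)

/-- The `i`-th `∂`-coefficient of `P` lies in `R[x]`. -/
def PolyCoeff (P : A) (i : ℕ) : Prop :=
  ∃ f : Polynomial R, O.coeff P i = algebraMap (Polynomial R) (QX R) f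

/-- `P` belongs to the subring `R[x][∂]` of `Q_R(x)[∂]`. -/
def InB (P : A) : Prop := ∀ i, O.PolyCoeff P i

/-- The order (degree in `∂`) of an operator. -/
def ord (P : A) : ℕ := sSup {i | O.coeff P i ≠ 0}

/-- The leading coefficient (with respect to `∂`), in `Q_R(x)`. -/
def lc (P : A) : QX R := O.coeff P (O.ord P)

/-- The contraction ideal `cont(L) = Q_R(x)[∂]·L ∩ R[x][∂]`. -/
def cont (L : A) : Set A := {P | O.InB P ∧ ∃ Q : A, P = Q * L}

/-- The `k`-th submodule `M_k(L) = {P ∈ cont(L) : deg_∂ P ≤ k}`. -/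
def M (L : A) (k : ℕ) : Set A := {P | P ∈ O.cont L ∧ O.ord P ≤ k}

/-- The `k`-th coefficient ideal `I_k = {[∂^k]P : P ∈ M_k} ∪ {0}` (as a set of
polynomials; `0` arises from `P = 0`). -/
def Icoeff (L : A) (k : ℕ) : Set (Polynomial R) :=
  {f | ∃ P ∈ O.M L k, O.coeff P k = algebraMap (Polynomial R) (QX R) f}

end OreAlg

/-- `gcd(p, w) = 1` in `R[x]`: every common divisor is a unit. -/
def Copr {R : Type} [CommRing R] (p w : Polynomial R) : Prop :=
  ∀ d : Polynomial R, d ∣ p → d ∣ w → IsUnit d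

namespace OreAlg

variable {R : Type} [CommRing R] [IsDomain R] {A : Type} [Ring A] (O : OreAlg R A)

/-- `P` is a `p`-removing operator for `L` over `R[x]`, of order `k`:
`P·L ∈ R[x][∂]` and `σ^{-k}(lc_∂(P·L)) = (w/(v·p))·lc_∂(L)` with `gcd(p, w) = 1`. -/
def IsRemoving (L : A) (p : Polynomial R) (k : ℕ) (P : A) : Prop :=
  O.ord P = k ∧ O.InB (P * L) ∧
  ∃ w v t l : Polynomial R, v ≠ 0 ∧ Copr p w ∧
    O.lc (P * L) = algebraMap (Polynomial R) (QX R) t ∧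
    O.lc L = algebraMap (Polynomial R) (QX R) l ∧
    (⇑O.σ.symm)^[k] t * (v * p) = w * l

/-- `p` is removable from `L` (at some order). -/
def Removable (L : A) (p : Polynomial R) : Prop :=
  ∃ k P, O.IsRemoving L p k P

/-- Factorization data for `lc_∂(L) = c·p₁^{e₁}⋯p_m^{e_m}`, with `c ∈ R` and the
`pᵢ ∈ R[x] \ R` irreducible and pairwise coprime; `L` has order `r > 0`. -/
def Factored (L : A) (r m : ℕ) (c : R) (p : Fin m → Polynomial R)
    (e : Fin m → ℕ) : Prop :=
  O.ord L = r ∧ 0 < r ∧ c ≠ 0 ∧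
  O.lc L = algebraMap (Polynomial R) (QX R) (C c * ∏ i, p i ^ e i) ∧
  (∀ i, Irreducible (p i) ∧ 0 < (p i).natDegree) ∧
  (∀ i j, i ≠ j → Copr (p i) (p j))

/-- `T` is a desingularized operator for `L`: `T ∈ cont(L)` and
`σ^{r-k}(lc_∂(T)) = (a/(b·∏ pᵢ^{kᵢ}))·lc_∂(L)` with `a, b ∈ R`, where each
`pᵢ^{dᵢ}` with `dᵢ > kᵢ` is non-removable from `L`. -/
def Desing (L : A) (r m : ℕ) (c : R) (p : Fin m → Polynomial R)
    (e : Fin m → ℕ) (T : A) : Prop :=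
  T ∈ O.cont L ∧ r ≤ O.ord T ∧
  ∃ (a b : R) (k : Fin m → ℕ) (t l : Polynomial R),
    b ≠ 0 ∧ (∀ i, k i ≤ e i) ∧
    O.lc T = algebraMap (Polynomial R) (QX R) t ∧
    O.lc L = algebraMap (Polynomial R) (QX R) l ∧
    (⇑O.σ.symm)^[O.ord T - r] t * (C b * ∏ i, p i ^ k i) = C a * l ∧
    (∀ i (d : ℕ), k i < d → ¬ O.Removable L (p i ^ d))

/-- The left ideal of `R[x][∂]` generated by a set `S ⊆ R[x][∂]`. -/
def LIdeal (S : Set A) : Set A :=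
  {P | ∃ (n : ℕ) (co s : Fin n → A), (∀ i, O.InB (co i)) ∧ (∀ i, s i ∈ S) ∧
    P = ∑ i, co i * s i}

/-- The constant `a ∈ R` viewed inside the Ore algebra. -/
def cst (a : R) : A := O.ιp (C a)

/-- The saturation `I : a^∞ = {P ∈ R[x][∂] : aⁱ·P ∈ I for some i}`. -/
def sat (I : Set A) (a : R) : Set A :=
  {P | O.InB P ∧ ∃ i : ℕ, O.cst a ^ i * P ∈ I}

end OreAlg

section Aux

open Function

lemma iter_mul {S : Type} [Semiring S] (eqv : S ≃+* S) (nn : ℕ) (x y : S) :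
    (⇑eqv)^[nn] (x * y) = (⇑eqv)^[nn] x * (⇑eqv)^[nn] y := by
  induction nn generalizing x y with
  | zero => rfl
  | succ nn ih =>
      rw [Function.iterate_succ_apply, Function.iterate_succ_apply,
        Function.iterate_succ_apply, map_mul, ih]

lemma copr_of_pow_of_not_dvd {α : Type*} [CommMonoidWithZero α]
    [UniqueFactorizationMonoid α] {q h : α} (hq : Irreducible q) (hh : ¬ q ∣ h) (d : ℕ) :
    ∀ dv : α, dv ∣ q ^ d → dv ∣ h → IsUnit dv := by
  intro dv h1 h2
  by_contra hu
  have hdv0 : dv ≠ 0 := by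
    rintro rfl
    exact hh (by rw [zero_dvd_iff.mp h2]; exact dvd_zero q)
  obtain ⟨qq, hqq, hqqd⟩ := WfDvdMonoid.exists_irreducible_factor hu hdv0
  have hqqp : Prime qq := UniqueFactorizationMonoid.irreducible_iff_prime.mp hqq
  have hdq : qq ∣ q := hqqp.dvd_of_dvd_pow (hqqd.trans h1)
  have hassoc : Associated qq q := hqq.associated_of_dvd hq hdq
  exact hh (hassoc.symm.dvd.trans (hqqd.trans h2))

lemma prod_pow_dvd_of_dvd {α : Type*} [CommMonoidWithZero α]
    [UniqueFactorizationMonoid α] {ι : Type} (s : Finset ι) (q : ι → α) (cc : ι → ℕ)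
    (hq : ∀ i, Irreducible (q i))
    (hcop : ∀ i j, i ≠ j → ∀ dv : α, dv ∣ q i → dv ∣ q j → IsUnit dv)
    (z : α) (hd : ∀ i, q i ^ cc i ∣ z) : (∏ i ∈ s, q i ^ cc i) ∣ z := by
  classical
  induction s using Finset.induction with
  | empty => simpa using one_dvd z
  | @insert x s hx ih =>
    rw [Finset.prod_insert hx]
    have hrel : IsRelPrime (q x ^ cc x) (∏ i ∈ s, q i ^ cc i) := by
      intro dv h1 h2
      by_contra hu
      have hdv0 : dv ≠ 0 := by
        rintro rfl
        exact pow_ne_zero (cc x) (hq x).ne_zero (zero_dvd_iff.mp h1)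
      obtain ⟨qq, hqq, hqqd⟩ := WfDvdMonoid.exists_irreducible_factor hu hdv0
      have hqqp : Prime qq := UniqueFactorizationMonoid.irreducible_iff_prime.mp hqq
      have hx1 : qq ∣ q x := hqqp.dvd_of_dvd_pow (hqqd.trans h1)
      have hqx : q x ∣ dv := ((hqq.associated_of_dvd (hq x) hx1).symm.dvd).trans hqqd
      have hpx : Prime (q x) := UniqueFactorizationMonoid.irreducible_iff_prime.mp (hq x)
      obtain ⟨i, his, hdvd⟩ := hpx.exists_mem_finset_dvd (hqx.trans h2)
      have hqxi : q x ∣ q i := hpx.dvd_of_dvd_pow hdvd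
      exact (hq x).not_isUnit (hcop x i (fun hxi => hx (hxi ▸ his)) (q x) dvd_rfl hqxi)
    exact hrel.mul_dvd (hd x) ih

lemma primitive_dvd_of_C_mul_eq {R : Type} [CommRing R] [IsDomain R] [IsPrincipalIdealRing R]
    {g' Pd : Polynomial R} {u v : R} (hg : g'.IsPrimitive) (hv : v ≠ 0)
    (heq : C u * g' = C v * Pd) : g' ∣ Pd := by
  have hrel : IsRelPrime g' (C v : Polynomial R) := by
    intro dv h1 h2
    have hCv : (C v : Polynomial R) ≠ 0 := by simpa using hv
    have hdeg : dv.natDegree = 0 := by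
      have h3 := Polynomial.natDegree_le_of_dvd h2 hCv
      simpa [Polynomial.natDegree_C] using h3
    have hdC : dv = C (dv.coeff 0) := Polynomial.eq_C_of_natDegree_eq_zero hdeg
    rw [hdC] at h1 ⊢
    exact Polynomial.isUnit_C.mpr (hg _ h1)
  have h3 : g' ∣ C v * Pd := by rw [← heq]; exact dvd_mul_left g' (C u)
  exact hrel.dvd_of_dvd_mul_left h3

namespace OreAlg

variable {R : Type} [CommRing R] [IsDomain R] {A : Type} [Ring A] (O : OreAlg R A)

lemma coeff_zeroA (i : ℕ) : O.coeff 0 i = 0 := by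
  have h := O.coeff_add 0 0 i
  rw [add_zero] at h
  exact (left_eq_add.mp h)

lemma bddAbove_coeff (P : A) : BddAbove {i | O.coeff P i ≠ 0} := by
  obtain ⟨N, hN⟩ := O.coeff_bdd P
  refine ⟨N, fun x hx => ?_⟩
  by_contra hx'
  exact hx (hN x (by omega))

lemma coeff_eq_zero_of_ord_lt {P : A} {i : ℕ} (h : O.ord P < i) : O.coeff P i = 0 := by
  by_contra hc
  have h2 : i ≤ O.ord P := le_csSup (O.bddAbove_coeff P) hc
  omega

lemma coeff_ord_ne_zero {P : A} (h : P ≠ 0) : O.coeff P (O.ord P) ≠ 0 := by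
  have hne : {i | O.coeff P i ≠ 0}.Nonempty := by
    by_contra hc
    apply h
    apply O.coeff_inj
    intro i
    rw [O.coeff_zeroA]
    by_contra hi
    exact hc ⟨i, hi⟩
  exact Nat.sSup_mem hne (O.bddAbove_coeff P)

lemma ord_le_of (P : A) (N : ℕ) (h : ∀ i, N < i → O.coeff P i = 0) : O.ord P ≤ N := by
  rcases Set.eq_empty_or_nonempty {i | O.coeff P i ≠ 0} with he | hne
  · unfold OreAlg.ord
    rw [he, csSup_empty]
    exact bot_le
  · refine csSup_le hne fun x hx => ?_
    by_contra hx'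
    exact hx (h x (by omega))

lemma ord_zeroA : O.ord (0 : A) = 0 :=
  Nat.le_zero.mp (O.ord_le_of 0 0 fun i _ => O.coeff_zeroA i)

lemma eq_expansion (P : A) (N : ℕ) (h : ∀ i, N < i → O.coeff P i = 0) :
    P = ∑ i ∈ Finset.range (N + 1), O.ι (O.coeff P i) * O.D ^ i :=
  O.coeff_inj _ _ fun j => (O.coeff_mk N (fun i => O.coeff P i) h j).symm

/-- finite sum with polynomial coefficients -/
def PS (c : ℕ → Polynomial R) (N : ℕ) : A :=
  ∑ i ∈ Finset.range (N + 1), O.ιp (c i) * O.D ^ i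

lemma coeff_PS (c : ℕ → Polynomial R) (N : ℕ) (h : ∀ i, N < i → c i = 0) (j : ℕ) :
    O.coeff (O.PS c N) j = algebraMap (Polynomial R) (QX R) (c j) :=
  O.coeff_mk N (fun i => algebraMap (Polynomial R) (QX R) (c i))
    (fun i hi => by show algebraMap (Polynomial R) (QX R) (c i) = 0; rw [h i hi, map_zero]) j

lemma ιp_zero : O.ιp 0 = 0 := by unfold ιp; rw [map_zero, map_zero]

lemma ιp_add (f g : Polynomial R) : O.ιp (f + g) = O.ιp f + O.ιp g := by
  unfold ιp; rw [map_add, map_add]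

lemma δ_zero : O.δ 0 = 0 := by
  have h := O.δ_add 0 0
  rw [add_zero] at h
  exact left_eq_add.mp h

/-- shift helper -/
def shiftc (c : ℕ → Polynomial R) : ℕ → Polynomial R
  | 0 => 0
  | (m + 1) => O.σ (c m)

/-- coefficients after multiplying by `D` on the left -/
def dstep (c : ℕ → Polynomial R) : ℕ → Polynomial R :=
  fun j => O.δ (c j) + O.shiftc c j

lemma D_mul_PS (c : ℕ → Polynomial R) (N : ℕ) (h : ∀ i, N < i → c i = 0) :
    O.D * O.PS c N = O.PS (O.dstep c) (N + 1) := by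
  unfold PS
  rw [Finset.mul_sum]
  have step : ∀ i ∈ Finset.range (N + 1), O.D * (O.ιp (c i) * O.D ^ i)
      = O.ιp (O.σ (c i)) * O.D ^ (i + 1) + O.ιp (O.δ (c i)) * O.D ^ i := by
    intro i _
    rw [← mul_assoc]
    rw [show O.D * O.ιp (c i) = O.ιp (O.σ (c i)) * O.D + O.ιp (O.δ (c i)) from O.comm_rule (c i)]
    rw [add_mul, mul_assoc, ← pow_succ']
  rw [Finset.sum_congr rfl step, Finset.sum_add_distrib]
  have hsplit : ∀ j ∈ Finset.range (N + 1 + 1),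
      O.ιp (O.dstep c j) * O.D ^ j
        = O.ιp (O.δ (c j)) * O.D ^ j + O.ιp (O.shiftc c j) * O.D ^ j := by
    intro j _
    rw [show O.dstep c j = O.δ (c j) + O.shiftc c j from rfl, O.ιp_add, add_mul]
  rw [Finset.sum_congr rfl hsplit, Finset.sum_add_distrib]
  have e1 : ∑ j ∈ Finset.range (N + 1 + 1), O.ιp (O.δ (c j)) * O.D ^ j
      = ∑ i ∈ Finset.range (N + 1), O.ιp (O.δ (c i)) * O.D ^ i := by
    rw [Finset.sum_range_succ, h (N + 1) (by omega), O.δ_zero, O.ιp_zero, zero_mul, add_zero]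
  have e2 : ∑ j ∈ Finset.range (N + 1 + 1), O.ιp (O.shiftc c j) * O.D ^ j
      = ∑ i ∈ Finset.range (N + 1), O.ιp (O.σ (c i)) * O.D ^ (i + 1) := by
    rw [Finset.sum_range_succ']
    rw [show O.shiftc c 0 = 0 from rfl, O.ιp_zero, zero_mul, add_zero]
    rfl
  rw [e1, e2]
  exact add_comm _ _

lemma Dpow_mul_PS (n : ℕ) (c : ℕ → Polynomial R) (N : ℕ) (h : ∀ i, N < i → c i = 0) :
    ∃ c2 : ℕ → Polynomial R, (∀ i, N + n < i → c2 i = 0) ∧ c2 (N + n) = (⇑O.σ)^[n] (c N) ∧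
      O.D ^ n * O.PS c N = O.PS c2 (N + n) := by
  induction n with
  | zero => exact ⟨c, by simpa using h, rfl, by rw [pow_zero, one_mul]; exact rfl⟩
  | succ n ih =>
    obtain ⟨c2, h1, h2, h3⟩ := ih
    refine ⟨O.dstep c2, ?_, ?_, ?_⟩
    · intro i hi
      cases i with
      | zero => omega
      | succ mm =>
        show O.δ (c2 (mm + 1)) + O.σ (c2 mm) = 0
        rw [h1 (mm + 1) (by omega), h1 mm (by omega), O.δ_zero, map_zero, add_zero]
    · show O.δ (c2 (N + n + 1)) + O.σ (c2 (N + n)) = _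
      rw [h1 (N + n + 1) (by omega), O.δ_zero, zero_add, h2,
        ← Function.iterate_succ_apply' O.σ n (c N)]
    · rw [pow_succ', mul_assoc, h3, O.D_mul_PS c2 (N + n) h1]
      exact rfl

lemma coeff_finsum {ι' : Type} (s : Finset ι') (fn : ι' → A) (mm : ℕ) :
    O.coeff (∑ i ∈ s, fn i) mm = ∑ i ∈ s, O.coeff (fn i) mm := by
  classical
  induction s using Finset.induction with
  | empty => simpa using O.coeff_zeroA mm
  | @insert x s hx ih => rw [Finset.sum_insert hx, Finset.sum_insert hx, O.coeff_add, ih]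

lemma ord_mul {Q L : A} (hQ : Q ≠ 0) (hL : L ≠ 0) (hLB : O.InB L) :
    O.ord (Q * L) = O.ord Q + O.ord L := by
  have algInj : Function.Injective (algebraMap (Polynomial R) (QX R)) :=
    IsFractionRing.injective _ _
  set n := O.ord Q with hn
  set r := O.ord L with hr
  choose lco hlco using hLB
  have hsup : ∀ i, r < i → lco i = 0 := by
    intro i hi
    apply algInj
    rw [← hlco, O.coeff_eq_zero_of_ord_lt hi, map_zero]
  have hLPS : L = O.PS lco r := by
    unfold PS
    rw [O.eq_expansion L r (fun i hi => O.coeff_eq_zero_of_ord_lt hi)]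
    exact Finset.sum_congr rfl fun i _ => by rw [hlco i]; rfl
  have hlr : lco r ≠ 0 := by
    intro h0
    apply O.coeff_ord_ne_zero hL
    rw [hlco, h0, map_zero]
  choose c2 hs ht hD using fun i => O.Dpow_mul_PS i lco r hsup
  have hQL : Q * L = ∑ i ∈ Finset.range (n + 1), O.ι (O.coeff Q i) * O.PS (c2 i) (r + i) := by
    conv_lhs => rw [O.eq_expansion Q n (fun i hi => O.coeff_eq_zero_of_ord_lt hi), hLPS]
    rw [Finset.sum_mul]
    refine Finset.sum_congr rfl fun i _ => ?_
    rw [mul_assoc, hD i]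
  have coeff_QL : ∀ mm, O.coeff (Q * L) mm
      = ∑ i ∈ Finset.range (n + 1), O.coeff Q i * algebraMap (Polynomial R) (QX R) (c2 i mm) := by
    intro mm
    rw [hQL, O.coeff_finsum]
    exact Finset.sum_congr rfl fun i _ => by rw [O.coeff_smul, O.coeff_PS (c2 i) (r + i) (hs i)]
  have htopne : O.coeff (Q * L) (r + n) ≠ 0 := by
    rw [coeff_QL]
    have hsum : (∑ i ∈ Finset.range (n + 1),
          O.coeff Q i * algebraMap (Polynomial R) (QX R) (c2 i (r + n)))
        = O.coeff Q n * algebraMap (Polynomial R) (QX R) (c2 n (r + n)) := by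
      apply Finset.sum_eq_single
      · intro i hi hne
        rw [hs i (r + n) (by simp only [Finset.mem_range] at hi; omega), map_zero, mul_zero]
      · intro hnn
        exact absurd (Finset.self_mem_range_succ n) hnn
    rw [hsum, ht n]
    refine mul_ne_zero (O.coeff_ord_ne_zero hQ) fun h0 => hlr ?_
    have h1 : (⇑O.σ)^[n] (lco r) = 0 := by
      apply algInj
      rw [h0, map_zero]
    have hinj : Function.Injective ((⇑O.σ)^[n]) := O.σ.injective.iterate n
    apply hinj
    rw [h1, Function.iterate_fixed (map_zero O.σ) n]
  have hhigh : ∀ mm, r + n < mm → O.coeff (Q * L) mm = 0 := by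
    intro mm hmm
    rw [coeff_QL]
    apply Finset.sum_eq_zero
    intro i hi
    rw [hs i mm (by simp only [Finset.mem_range] at hi; omega), map_zero, mul_zero]
  have hle : O.ord (Q * L) ≤ r + n := O.ord_le_of _ _ hhigh
  have hge : r + n ≤ O.ord (Q * L) := le_csSup (O.bddAbove_coeff _) htopne
  omega

end OreAlg

end Aux

/-- if `T` is a desingularized operator of order `k` with
`lc_∂(T) = a·g` (`a ∈ R`, `g` primitive), then for every `F ∈ cont(L)` of order
`j ≥ k`, `σ^{j-k}(g)` divides `lc_∂(F)` in `R[x]`. -/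
theorem desing_lc_divides {R : Type} [CommRing R] [IsDomain R]
    [IsPrincipalIdealRing R] {A : Type} [Ring A] (O : OreAlg R A)
    (L : A) (hL : L ≠ 0) (hLB : O.InB L)
    (r m : ℕ) (c : R) (p : Fin m → Polynomial R) (e : Fin m → ℕ)
    (hF : O.Factored L r m c p e)
    (T : A) (hT : O.Desing L r m c p e T)
    (k : ℕ) (hk : O.ord T = k)
    (a : R) (g : Polynomial R) (hg : g.IsPrimitive)
    (hlcT : O.lc T = algebraMap (Polynomial R) (QX R) (C a * g)) :
    ∀ F ∈ O.cont L, ∀ j : ℕ, O.ord F = j → k ≤ j →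
      ∀ f : Polynomial R, O.lc F = algebraMap (Polynomial R) (QX R) f →
        (⇑O.σ)^[j - k] g ∣ f := by
  classical
  obtain ⟨hordL, hr0, hc0, hlcLF, hirr, hcopr⟩ := hF
  obtain ⟨hTc, hrT, a', b, kk, t, l, hb, hkle, hlcT', hlcL', heqD, hnonrem⟩ := hT
  intro F hFc j hj hkj f hf
  have algInj : Function.Injective (algebraMap (Polynomial R) (QX R)) :=
    IsFractionRing.injective _ _
  by_cases hF0 : F = 0
  · have hf0 : f = 0 := by
      apply algInj
      rw [map_zero, ← hf, hF0]
      show O.coeff 0 (O.ord 0) = 0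
      rw [O.coeff_zeroA]
    rw [hf0]
    exact dvd_zero _
  obtain ⟨hFB, Q, hFQ⟩ := hFc
  have hQ0 : Q ≠ 0 := by
    rintro rfl
    rw [zero_mul] at hFQ
    exact hF0 hFQ
  set n := O.ord Q with hn
  have hmul : O.ord (Q * L) = O.ord Q + O.ord L := O.ord_mul hQ0 hL hLB
  have hjnr : j = n + r := by
    rw [← hj, hFQ, hmul, hn, hordL]
  -- identify t and l
  have hl : l = C c * ∏ i, p i ^ e i := algInj (by rw [← hlcL', hlcLF])
  have ht' : t = C a * g := algInj (by rw [← hlcT', hlcT])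
  -- nonvanishing facts
  have hT0 : T ≠ 0 := by
    rintro rfl
    rw [O.ord_zeroA] at hrT
    omega
  have hg0 : g ≠ 0 := by
    rintro rfl
    simpa using hg 0 (dvd_zero _)
  have ha0 : a ≠ 0 := by
    rintro rfl
    apply O.coeff_ord_ne_zero hT0
    show O.coeff T (O.ord T) = 0
    have hz : O.lc T = 0 := by rw [hlcT]; simp
    exact hz
  have hsymm_fix : ∀ r0 : R, O.σ.symm (C r0) = C r0 := fun r0 =>
    O.σ.symm_apply_eq.mpr (O.σ_fix r0).symm
  have hrk : r ≤ k := hk ▸ hrT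
  set g' : Polynomial R := (⇑O.σ.symm)^[k - r] g with hg'
  have hgg : (⇑O.σ)^[k - r] g' = g :=
    (Function.LeftInverse.iterate O.σ.apply_symm_apply (k - r)) g
  have hCt : (⇑O.σ.symm)^[k - r] (C a * g) = C a * g' := by
    rw [iter_mul (O.σ.symm : Polynomial R ≃+* Polynomial R) (k - r) (C a) g,
      Function.iterate_fixed (hsymm_fix a) (k - r)]
  have heq2 : (C a * g') * (C b * ∏ i, p i ^ kk i) = C a' * (C c * ∏ i, p i ^ e i) := by
    have h2 := heqD
    rw [hk, ht', hl, hCt] at h2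
    exact h2
  have hPk0 : (∏ i, p i ^ kk i) ≠ 0 :=
    Finset.prod_ne_zero_iff.mpr fun i _ => pow_ne_zero _ (hirr i).1.ne_zero
  have hPe : (∏ i, p i ^ e i) = (∏ i, p i ^ kk i) * ∏ i, p i ^ (e i - kk i) := by
    rw [← Finset.prod_mul_distrib]
    refine Finset.prod_congr rfl fun i _ => ?_
    rw [← pow_add]
    congr 1
    have := hkle i
    omega
  have heq3 : C (a * b) * g' = C (a' * c) * ∏ i, p i ^ (e i - kk i) := by
    apply mul_right_cancel₀ hPk0
    rw [map_mul, map_mul]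
    calc C a * C b * g' * ∏ i, p i ^ kk i
        = (C a * g') * (C b * ∏ i, p i ^ kk i) := by ring
      _ = C a' * (C c * ∏ i, p i ^ e i) := heq2
      _ = C a' * C c * (∏ i, p i ^ (e i - kk i)) * ∏ i, p i ^ kk i := by rw [hPe]; ring
  have hg'prim : g'.IsPrimitive := by
    intro r0 hr0d
    obtain ⟨z, hz⟩ := hr0d
    apply hg r0
    refine ⟨(⇑O.σ)^[k - r] z, ?_⟩
    rw [← hgg, hz, iter_mul (O.σ : Polynomial R ≃+* Polynomial R) (k - r),
      Function.iterate_fixed (O.σ_fix r0) (k - r)]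
  have hg'0 : g' ≠ 0 := by
    intro h0
    apply hg0
    rw [← hgg, h0, Function.iterate_fixed (map_zero O.σ) (k - r)]
  have hac : a' * c ≠ 0 := by
    intro h0
    rw [h0, map_zero, zero_mul] at heq3
    rcases mul_eq_zero.mp heq3 with h1 | h1
    · exact (mul_ne_zero ha0 hb) (by simpa using h1)
    · exact hg'0 h1
  have hg'Pd : g' ∣ ∏ i, p i ^ (e i - kk i) :=
    primitive_dvd_of_C_mul_eq hg'prim hac heq3
  have hf0 : f ≠ 0 := by
    intro h0
    apply O.coeff_ord_ne_zero hF0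
    show O.coeff F (O.ord F) = 0
    have hz : O.lc F = 0 := by rw [hf, h0, map_zero]
    exact hz
  set f' : Polynomial R := (⇑O.σ.symm)^[n] f with hf'
  have hff' : (⇑O.σ)^[n] f' = f :=
    (Function.LeftInverse.iterate O.σ.apply_symm_apply n) f
  have hf'0 : f' ≠ 0 := by
    intro h0
    rw [h0, Function.iterate_fixed (map_zero O.σ) n] at hff'
    exact hf0 hff'.symm
  have hkey : ∀ i : Fin m, p i ^ (e i - kk i) ∣ f' := by
    intro i
    obtain ⟨mi, hh, hhnd, hfdec⟩ := WfDvdMonoid.max_power_factor hf'0 (hirr i).1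
    rcases le_or_gt (e i - kk i) mi with hle | hlt
    · exact dvd_trans (pow_dvd_pow _ hle) ⟨hh, hfdec⟩
    · exfalso
      have hmi : mi < e i := by have := hkle i; omega
      have hd : kk i < e i - mi := by omega
      apply hnonrem i (e i - mi) hd
      refine ⟨n, Q, hn.symm, hFQ ▸ hFB,
        hh, C c * ∏ i' ∈ Finset.univ.erase i, p i' ^ e i', f, l, ?_, ?_, ?_, hlcL', ?_⟩
      · refine mul_ne_zero (by simpa using hc0) ?_
        exact Finset.prod_ne_zero_iff.mpr fun i' _ => pow_ne_zero _ (hirr i').1.ne_zero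
      · intro dv h1 h2
        exact copr_of_pow_of_not_dvd (hirr i).1 hhnd (e i - mi) dv h1 h2
      · rw [← hFQ]
        exact hf
      · rw [← hf', hfdec, hl]
        have hpow : p i ^ mi * p i ^ (e i - mi) = p i ^ e i := by
          rw [← pow_add]
          congr 1
          omega
        have hprod : p i ^ e i * ∏ i' ∈ Finset.univ.erase i, p i' ^ e i'
            = ∏ i', p i' ^ e i' := Finset.mul_prod_erase Finset.univ (fun i' => p i' ^ e i') (Finset.mem_univ i)
        calc (p i ^ mi * hh) * ((C c * ∏ i' ∈ Finset.univ.erase i, p i' ^ e i') * p i ^ (e i - mi))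
            = hh * (C c * (p i ^ mi * p i ^ (e i - mi) * ∏ i' ∈ Finset.univ.erase i, p i' ^ e i')) := by
              ring
          _ = hh * (C c * (p i ^ e i * ∏ i' ∈ Finset.univ.erase i, p i' ^ e i')) := by rw [hpow]
          _ = hh * (C c * ∏ i', p i' ^ e i') := by rw [hprod]
  have hPdf : (∏ i, p i ^ (e i - kk i)) ∣ f' :=
    prod_pow_dvd_of_dvd Finset.univ p (fun i => e i - kk i) (fun i => (hirr i).1)
      (fun i i' hii' => hcopr i i' hii') f' hkey
  obtain ⟨z, hz⟩ := hg'Pd.trans hPdf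
  have hfinal : f = (⇑O.σ)^[n] g' * (⇑O.σ)^[n] z := by
    rw [← hff', hz, iter_mul (O.σ : Polynomial R ≃+* Polynomial R) n]
  have hng : (⇑O.σ)^[n] g' = (⇑O.σ)^[j - k] g := by
    have hsplit : n = (j - k) + (k - r) := by omega
    rw [hsplit, Function.iterate_add_apply, hgg]
  exact ⟨(⇑O.σ)^[n] z, by rw [← hng]; exact hfinal⟩
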